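/- Heavy-traffic limit of the Wardrop split in a duopoly: let N, k ∈ ℕ with N/2 ≤ k ≤ N − 1. For each Λ > 0 let λ₁(Λ) be the unique number in (0, Λ) satisfying B(k, λ₁(Λ)) = B(N − k, Λ − λ₁(Λ)). Then λ₁(Λ)/Λ → k/N as Λ → ∞, i.e. in heavy traffic each coalition's market share is asymptotically proportional to its service capacity. -/

import Mathlib

open Filter

/-- The Erlang-B blocking probability with `M` servers and offered load `a`:
`B(M, a) = (a^M / M!) / (∑_{j=0}^{M} a^j / j!)`. -/
noncomputable def ErlangB (M : ℕ) (a : ℝ) : ℝ :=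
  (a ^ M / (Nat.factorial M : ℝ)) / (∑ j ∈ Finset.range (M + 1), a ^ j / (Nat.factorial j : ℝ))

noncomputable def gB (M : ℕ) (a : ℝ) : ℝ :=
  ∑ j ∈ Finset.range M, ((M.factorial : ℝ) / (j.factorial : ℝ)) / a ^ (M - j)

lemma gB_pos (M : ℕ) (hM : 1 ≤ M) {a : ℝ} (ha : 0 < a) : 0 < gB M a := by
  apply Finset.sum_pos
  · intro j hj
    exact div_pos (div_pos (by positivity) (by positivity)) (pow_pos ha _)
  · exact ⟨0, Finset.mem_range.2 hM⟩

lemma gB_anti (M : ℕ) {x y : ℝ} (hx : 0 < x) (hxy : x ≤ y) : gB M y ≤ gB M x := by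
  apply Finset.sum_le_sum
  intro j hj
  apply div_le_div_of_nonneg_left (by positivity) (pow_pos hx _)
  exact pow_le_pow_left₀ hx.le hxy _

lemma erlangB_eq (M : ℕ) {a : ℝ} (ha : 0 < a) : ErlangB M a = 1 / (1 + gB M a) := by
  have hT : (0:ℝ) < a ^ M / (M.factorial : ℝ) := by positivity
  have hS : (∑ j ∈ Finset.range (M + 1), a ^ j / (Nat.factorial j : ℝ))
      = (a ^ M / (M.factorial : ℝ)) * (1 + gB M a) := by
    rw [Finset.sum_range_succ, gB, mul_add, mul_one, Finset.mul_sum, add_comm]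
    congr 1
    apply Finset.sum_congr rfl
    intro j hj
    have hj' : j < M := Finset.mem_range.1 hj
    have hpow : a ^ M = a ^ j * a ^ (M - j) := by
      rw [← pow_add]; congr 1; omega
    have h1 : (M.factorial : ℝ) ≠ 0 := by positivity
    have h2 : (j.factorial : ℝ) ≠ 0 := by positivity
    have h3 : a ^ (M - j) ≠ 0 := by positivity
    field_simp [hpow]
    ring_nf
    linarith [hpow]
  rw [ErlangB, hS, div_mul_eq_div_div, div_self hT.ne']

lemma mul_gB_tendsto (M : ℕ) (hM : 1 ≤ M) :
    Tendsto (fun a => a * gB M a) atTop (nhds (M : ℝ)) := by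
  have key : ∀ j ∈ Finset.range M,
      Tendsto (fun a : ℝ => ((M.factorial : ℝ) / (j.factorial : ℝ)) / a ^ (M - 1 - j)) atTop
        (nhds (if j = M - 1 then (M : ℝ) else 0)) := by
    intro j hj
    have hj' : j < M := Finset.mem_range.1 hj
    by_cases h : j = M - 1
    · subst h
      have hz : M - 1 - (M - 1) = 0 := by omega
      rw [if_pos rfl, hz]
      simp only [pow_zero, div_one]
      have hfac : (M.factorial : ℝ) / ((M-1).factorial : ℝ) = (M : ℝ) := by
        have h1 : M.factorial = M * (M-1).factorial := by
          conv_lhs => rw [show M = (M-1)+1 by omega]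
          rw [Nat.factorial_succ]
          congr 1
          omega
        rw [h1]
        push_cast
        rw [mul_div_assoc, div_self (by positivity), mul_one]
      rw [hfac]
      exact tendsto_const_nhds
    · rw [if_neg h]
      have hp : M - 1 - j ≠ 0 := by omega
      exact Tendsto.div_atTop tendsto_const_nhds (tendsto_pow_atTop hp)
  have hsum := tendsto_finset_sum (Finset.range M) key
  have hval : (∑ j ∈ Finset.range M, (if j = M - 1 then (M : ℝ) else 0)) = (M : ℝ) := by
    rw [Finset.sum_ite_eq' (Finset.range M) (M-1) (fun _ => (M:ℝ))]
    rw [if_pos (Finset.mem_range.2 (by omega))]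
  rw [hval] at hsum
  apply hsum.congr'
  filter_upwards [eventually_gt_atTop (0:ℝ)] with a ha
  rw [gB, Finset.mul_sum]
  apply Finset.sum_congr rfl
  intro j hj
  have hj' : j < M := Finset.mem_range.1 hj
  have hpow : a ^ (M - j) = a ^ (M - 1 - j) * a := by
    rw [← pow_succ]; congr 1; omega
  rw [hpow]
  have h1 : a ^ (M - 1 - j) ≠ 0 := by positivity
  field_simp

lemma gB_tendsto_zero (M : ℕ) (hM : 1 ≤ M) : Tendsto (gB M) atTop (nhds 0) := by
  have h := (mul_gB_tendsto M hM).mul tendsto_inv_atTop_zero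
  rw [mul_zero] at h
  apply h.congr'
  filter_upwards [eventually_gt_atTop (0:ℝ)] with a ha
  field_simp

lemma div_div_div_same (a b c : ℝ) (hb : b ≠ 0) (hc : c ≠ 0) : (a/c)/(b/c) = a/b := by
  field_simp

lemma split_tendsto_atTop (k₁ k₂ : ℕ) (h₁ : 1 ≤ k₁) (h₂ : 1 ≤ k₂) (x : ℝ → ℝ)
    (hx : ∀ᶠ Λ in atTop, 0 < x Λ ∧ x Λ < Λ ∧ gB k₁ (x Λ) = gB k₂ (Λ - x Λ)) :
    Tendsto x atTop atTop := by
  rw [tendsto_atTop]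
  intro b
  set C : ℝ := max b 1 with hC
  have hC0 : 0 < C := lt_of_lt_of_le one_pos (le_max_right _ _)
  have hgC : 0 < gB k₁ C := gB_pos k₁ h₁ hC0
  have htend : Tendsto (fun Λ : ℝ => gB k₂ (Λ - C)) atTop (nhds 0) := by
    exact (gB_tendsto_zero k₂ h₂).comp (tendsto_atTop_add_const_right atTop (-C)
      tendsto_id |>.congr (fun Λ => by simp [sub_eq_add_neg]))
  have hev : ∀ᶠ Λ in atTop, gB k₂ (Λ - C) < gB k₁ C := htend.eventually (gt_mem_nhds hgC)
  filter_upwards [hx, hev, eventually_gt_atTop C] with Λ ⟨hx0, hxΛ, hgeq⟩ hlt hΛC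
  by_contra h
  push_neg at h
  have hxC : x Λ ≤ C := le_trans h.le (le_max_left _ _)
  have h1 : gB k₁ C ≤ gB k₁ (x Λ) := gB_anti k₁ hx0 hxC
  have h2 : gB k₂ (Λ - x Λ) ≤ gB k₂ (Λ - C) :=
    gB_anti k₂ (by linarith) (by linarith)
  linarith [hgeq ▸ h1]

/-- Heavy-traffic limit of the Wardrop split in a duopoly: let `N, k ∈ ℕ` with
`N/2 ≤ k ≤ N − 1`.  For each `Λ > 0` let `λ₁(Λ)` be the (unique) number in `(0, Λ)`
satisfying `B(k, λ₁(Λ)) = B(N − k, Λ − λ₁(Λ))`.  Then `λ₁(Λ)/Λ → k/N` as `Λ → ∞`. -/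
theorem wardrop_duopoly_heavy_traffic (N k : ℕ)
    (hk₁ : (N : ℝ) / 2 ≤ (k : ℝ)) (hk₂ : k + 1 ≤ N)
    (lam₁ : ℝ → ℝ)
    (hlam : ∀ Λ : ℝ, 0 < Λ → lam₁ Λ ∈ Set.Ioo 0 Λ ∧
      ErlangB k (lam₁ Λ) = ErlangB (N - k) (Λ - lam₁ Λ)) :
    Tendsto (fun Λ => lam₁ Λ / Λ) atTop (nhds ((k : ℝ) / (N : ℝ))) := by
  set m : ℕ := N - k with hm
  have hk1 : 1 ≤ k := by
    by_contra h
    push_neg at h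
    interval_cases k
    · simp at hk₁
      have : N = 0 := by
        have := Nat.cast_nonneg (α := ℝ) N
        have hN : (N:ℝ) ≤ 0 := by linarith
        exact_mod_cast le_antisymm hN (by positivity)
      omega
  have hm1 : 1 ≤ m := by omega
  have hmR : (m : ℝ) = (N : ℝ) - (k : ℝ) := by
    rw [hm]; push_cast [Nat.cast_sub (by omega : k ≤ N)]; ring
  have hmpos : (0:ℝ) < m := by exact_mod_cast hm1
  have hNpos : (0:ℝ) < N := by
    have : (0:ℕ) < N := by omega
    exact_mod_cast this
  -- translate ErlangB equality into gB equality
  have hgeq : ∀ Λ : ℝ, 0 < Λ → gB k (lam₁ Λ) = gB m (Λ - lam₁ Λ) := by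
    intro Λ hΛ
    obtain ⟨⟨h0, hΛ'⟩, hB⟩ := hlam Λ hΛ
    rw [erlangB_eq k h0, erlangB_eq (N - k) (by linarith)] at hB
    have hg1 : 0 < gB k (lam₁ Λ) := gB_pos k hk1 h0
    have hg2 : 0 < gB m (Λ - lam₁ Λ) := gB_pos m hm1 (by linarith)
    rw [div_eq_div_iff (by linarith : (0:ℝ) < 1 + gB k (lam₁ Λ)).ne' (by linarith : (0:ℝ) < 1 + gB (N-k) (Λ - lam₁ Λ)).ne'] at hB
    · rw [← hm] at hB; linarith
  have T1 : Tendsto lam₁ atTop atTop := by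
    apply split_tendsto_atTop k m hk1 hm1
    filter_upwards [eventually_gt_atTop (0:ℝ)] with Λ hΛ
    obtain ⟨⟨h0, hΛ'⟩, _⟩ := hlam Λ hΛ
    exact ⟨h0, hΛ', hgeq Λ hΛ⟩
  have T2 : Tendsto (fun Λ => Λ - lam₁ Λ) atTop atTop := by
    apply split_tendsto_atTop m k hm1 hk1
    filter_upwards [eventually_gt_atTop (0:ℝ)] with Λ hΛ
    obtain ⟨⟨h0, hΛ'⟩, _⟩ := hlam Λ hΛ
    refine ⟨by linarith, by linarith, ?_⟩
    rw [show Λ - (Λ - lam₁ Λ) = lam₁ Λ by ring]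
    exact (hgeq Λ hΛ).symm
  have A1 : Tendsto (fun Λ => lam₁ Λ * gB k (lam₁ Λ)) atTop (nhds (k : ℝ)) :=
    (mul_gB_tendsto k hk1).comp T1
  have A2 : Tendsto (fun Λ => (Λ - lam₁ Λ) * gB m (Λ - lam₁ Λ)) atTop (nhds (m : ℝ)) :=
    (mul_gB_tendsto m hm1).comp T2
  have A3 : Tendsto (fun Λ => (lam₁ Λ * gB k (lam₁ Λ)) / ((Λ - lam₁ Λ) * gB m (Λ - lam₁ Λ)))
      atTop (nhds ((k : ℝ) / (m : ℝ))) := A1.div A2 hmpos.ne'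
  have A4 : Tendsto (fun Λ => lam₁ Λ / (Λ - lam₁ Λ)) atTop (nhds ((k : ℝ) / (m : ℝ))) := by
    apply A3.congr'
    filter_upwards [eventually_gt_atTop (0:ℝ)] with Λ hΛ
    obtain ⟨⟨h0, hΛ'⟩, _⟩ := hlam Λ hΛ
    rw [← hgeq Λ hΛ, mul_div_mul_right _ _ (gB_pos k hk1 h0).ne']
  have hkm : (0:ℝ) ≤ (k:ℝ)/(m:ℝ) := by positivity
  have A5 : Tendsto (fun Λ => (lam₁ Λ / (Λ - lam₁ Λ)) / (1 + lam₁ Λ / (Λ - lam₁ Λ)))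
      atTop (nhds (((k:ℝ)/(m:ℝ)) / (1 + (k:ℝ)/(m:ℝ)))) :=
    A4.div (tendsto_const_nhds.add A4) (by linarith)
  have hval : ((k:ℝ)/(m:ℝ)) / (1 + (k:ℝ)/(m:ℝ)) = (k:ℝ)/(N:ℝ) := by
    have h1 : 1 + (k:ℝ)/(m:ℝ) = (N:ℝ)/(m:ℝ) := by
      rw [eq_div_iff hmpos.ne', add_mul, one_mul, div_mul_cancel₀ _ hmpos.ne']
      linarith [hmR]
    rw [h1, div_div_div_same _ _ _ hNpos.ne' hmpos.ne']
  rw [hval] at A5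
  apply A5.congr'
  filter_upwards [eventually_gt_atTop (0:ℝ)] with Λ hΛ
  obtain ⟨⟨h0, hΛ'⟩, _⟩ := hlam Λ hΛ
  have hy : Λ - lam₁ Λ ≠ 0 := by linarith
  have hd : (0:ℝ) < 1 + lam₁ Λ / (Λ - lam₁ Λ) := by
    have := div_pos h0 (by linarith : (0:ℝ) < Λ - lam₁ Λ)
    linarith
  have h2 : 1 + lam₁ Λ/(Λ - lam₁ Λ) = Λ/(Λ - lam₁ Λ) := by
    rw [eq_div_iff hy, add_mul, one_mul, div_mul_cancel₀ _ hy]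
    ring
  rw [h2, div_div_div_same _ _ _ hΛ.ne' hy]
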